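/- If a derivation D in the natural deduction system nC has open assumptions Γ and end-formula β, then the sequent Γ ⇒ β is provable in the sequent calculus sC (with cut). -/
import Mathlib


inductive Fm : Type
  | var : ℕ → Fm
  | conj : Fm → Fm → Fm
  | disj : Fm → Fm → Fm
  | impl : Fm → Fm → Fm
  | neg : Fm → Fm
  deriving DecidableEq

open Fm

/-- Optional rules: cut, (ex-middle), (Peirce), (g-ex-middle), (at-ex-middle). -/
structure Rules where
  cut : Bool := false
  exMid : Bool := false
  peirce : Bool := false
  gem : Bool := false
  atEx : Bool := false

/-- The sequent calculus sC for Wansing's connexive logic C, with optional extra rules. -/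
inductive SC (R : Rules) : Finset Fm → Fm → Prop
  | init1 (p : ℕ) (Γ : Finset Fm) : SC R (insert (var p) Γ) (var p)
  | init2 (p : ℕ) (Γ : Finset Fm) : SC R (insert (neg (var p)) Γ) (neg (var p))
  | cut {Γ Δ : Finset Fm} {a c : Fm} : R.cut = true →
      SC R Γ a → SC R (insert a Δ) c → SC R (Γ ∪ Δ) c
  | implL {Γ Δ : Finset Fm} {a b c : Fm} :
      SC R Γ a → SC R (insert b Δ) c → SC R (insert (impl a b) (Γ ∪ Δ)) c
  | implR {Γ : Finset Fm} {a b : Fm} :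
      SC R (insert a Γ) b → SC R Γ (impl a b)
  | conjL {Γ : Finset Fm} {a b c : Fm} :
      SC R (insert a (insert b Γ)) c → SC R (insert (conj a b) Γ) c
  | conjR {Γ : Finset Fm} {a b : Fm} :
      SC R Γ a → SC R Γ b → SC R Γ (conj a b)
  | disjL {Γ : Finset Fm} {a b c : Fm} :
      SC R (insert a Γ) c → SC R (insert b Γ) c → SC R (insert (disj a b) Γ) c
  | disjR1 {Γ : Finset Fm} {a b : Fm} : SC R Γ a → SC R Γ (disj a b)
  | disjR2 {Γ : Finset Fm} {a b : Fm} : SC R Γ b → SC R Γ (disj a b)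
  | negnegL {Γ : Finset Fm} {a c : Fm} :
      SC R (insert a Γ) c → SC R (insert (neg (neg a)) Γ) c
  | negnegR {Γ : Finset Fm} {a : Fm} : SC R Γ a → SC R Γ (neg (neg a))
  | negimplL {Γ Δ : Finset Fm} {a b c : Fm} :
      SC R Γ a → SC R (insert (neg b) Δ) c → SC R (insert (neg (impl a b)) (Γ ∪ Δ)) c
  | negimplR {Γ : Finset Fm} {a b : Fm} :
      SC R (insert a Γ) (neg b) → SC R Γ (neg (impl a b))
  | negconjL {Γ : Finset Fm} {a b c : Fm} :
      SC R (insert (neg a) Γ) c → SC R (insert (neg b) Γ) c →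
      SC R (insert (neg (conj a b)) Γ) c
  | negconjR1 {Γ : Finset Fm} {a b : Fm} : SC R Γ (neg a) → SC R Γ (neg (conj a b))
  | negconjR2 {Γ : Finset Fm} {a b : Fm} : SC R Γ (neg b) → SC R Γ (neg (conj a b))
  | negdisjL {Γ : Finset Fm} {a b c : Fm} :
      SC R (insert (neg a) (insert (neg b) Γ)) c → SC R (insert (neg (disj a b)) Γ) c
  | negdisjR {Γ : Finset Fm} {a b : Fm} :
      SC R Γ (neg a) → SC R Γ (neg b) → SC R Γ (neg (disj a b))
  | exMid {Γ : Finset Fm} {a c : Fm} : R.exMid = true →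
      SC R (insert (neg a) Γ) c → SC R (insert a Γ) c → SC R Γ c
  | peirce {Γ : Finset Fm} {a b : Fm} : R.peirce = true →
      SC R (insert (impl a b) Γ) a → SC R Γ a
  | gem {Γ : Finset Fm} {a b c : Fm} : R.gem = true →
      SC R (insert (impl a b) Γ) c → SC R (insert a Γ) c → SC R Γ c
  | atEx {Γ : Finset Fm} {p : ℕ} {c : Fm} : R.atEx = true →
      SC R (insert (neg (var p)) Γ) c → SC R (insert (var p) Γ) c → SC R Γ c

/-- sC (with cut). -/
def sC : Rules := { cut := true }
/-- cut-free sC. -/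
def sCcf : Rules := {}
/-- sC3 = sC + (ex-middle). -/
def sC3 : Rules := { cut := true, exMid := true }
/-- sMC = sC + (Peirce). -/
def sMC : Rules := { cut := true, peirce := true }
/-- sMC* = sC + (g-ex-middle). -/
def sMCstar : Rules := { cut := true, gem := true }

/-- The natural deduction system nC: NC Γ β means there is a derivation in nC with
open assumptions exactly Γ and end-formula β. -/
inductive NC : Finset Fm → Fm → Prop
  | ass (a : Fm) : NC {a} a
  | impI (a : Fm) {Γ : Finset Fm} {b : Fm} : NC Γ b → NC (Γ.erase a) (impl a b)
  | impE {Γ Δ : Finset Fm} {a b : Fm} : NC Γ (impl a b) → NC Δ a → NC (Γ ∪ Δ) b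
  | conjI {Γ Δ : Finset Fm} {a b : Fm} : NC Γ a → NC Δ b → NC (Γ ∪ Δ) (conj a b)
  | conjE1 {Γ : Finset Fm} {a b : Fm} : NC Γ (conj a b) → NC Γ a
  | conjE2 {Γ : Finset Fm} {a b : Fm} : NC Γ (conj a b) → NC Γ b
  | disjI1 {Γ : Finset Fm} {a b : Fm} : NC Γ a → NC Γ (disj a b)
  | disjI2 {Γ : Finset Fm} {a b : Fm} : NC Γ b → NC Γ (disj a b)
  | disjE {Γ Δ Θ : Finset Fm} {a b c : Fm} :
      NC Γ (disj a b) → NC Δ c → NC Θ c → NC ((Γ ∪ Δ.erase a) ∪ Θ.erase b) c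
  | negnegI {Γ : Finset Fm} {a : Fm} : NC Γ a → NC Γ (neg (neg a))
  | negnegE {Γ : Finset Fm} {a : Fm} : NC Γ (neg (neg a)) → NC Γ a
  | negimpI (a : Fm) {Γ : Finset Fm} {b : Fm} :
      NC Γ (neg b) → NC (Γ.erase a) (neg (impl a b))
  | negimpE {Γ Δ : Finset Fm} {a b : Fm} :
      NC Γ (neg (impl a b)) → NC Δ a → NC (Γ ∪ Δ) (neg b)
  | negconjI1 {Γ : Finset Fm} {a b : Fm} : NC Γ (neg a) → NC Γ (neg (conj a b))
  | negconjI2 {Γ : Finset Fm} {a b : Fm} : NC Γ (neg b) → NC Γ (neg (conj a b))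
  | negconjE {Γ Δ Θ : Finset Fm} {a b c : Fm} :
      NC Γ (neg (conj a b)) → NC Δ c → NC Θ c →
      NC ((Γ ∪ Δ.erase (neg a)) ∪ Θ.erase (neg b)) c
  | negdisjI {Γ Δ : Finset Fm} {a b : Fm} :
      NC Γ (neg a) → NC Δ (neg b) → NC (Γ ∪ Δ) (neg (disj a b))
  | negdisjE1 {Γ : Finset Fm} {a b : Fm} : NC Γ (neg (disj a b)) → NC Γ (neg a)
  | negdisjE2 {Γ : Finset Fm} {a b : Fm} : NC Γ (neg (disj a b)) → NC Γ (neg b)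

/-- an nC derivation with open assumptions Γ and end-formula β yields
sC (with cut) provability of Γ ⇒ β. -/
lemma SC.weak {R : Rules} {Γ : Finset Fm} {c : Fm} (h : SC R Γ c) :
    ∀ Δ, Γ ⊆ Δ → SC R Δ c := by
  induction h with
  | init1 p Γ =>
    intro Δ hΔ
    have : Δ = insert (var p) Δ :=
      (Finset.insert_eq_self.mpr (hΔ (Finset.mem_insert_self _ _))).symm
    rw [this]; exact SC.init1 p Δ
  | init2 p Γ =>
    intro Δ hΔ
    have : Δ = insert (neg (var p)) Δ :=
      (Finset.insert_eq_self.mpr (hΔ (Finset.mem_insert_self _ _))).symm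
    rw [this]; exact SC.init2 p Δ
  | cut hr h1 h2 ih1 ih2 =>
    intro S hS
    have := SC.cut hr (ih1 S (fun x hx => hS (Finset.mem_union_left _ hx)))
      (ih2 (insert _ S) (Finset.insert_subset_insert _
        (fun x hx => hS (Finset.mem_union_right _ hx))))
    simpa using this
  | implL h1 h2 ih1 ih2 =>
    intro S hS
    have hm : impl _ _ ∈ S := hS (Finset.mem_insert_self _ _)
    have hsub : _ ∪ _ ⊆ S := fun x hx => hS (Finset.mem_insert_of_mem hx)
    have := SC.implL (ih1 S (fun x hx => hsub (Finset.mem_union_left _ hx)))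
      (ih2 (insert _ S) (Finset.insert_subset_insert _
        (fun x hx => hsub (Finset.mem_union_right _ hx))))
    simpa [Finset.insert_eq_self.mpr hm] using this
  | implR h1 ih1 =>
    intro S hS
    exact SC.implR (ih1 _ (Finset.insert_subset_insert _ hS))
  | conjL h1 ih1 =>
    intro S hS
    have hm : conj _ _ ∈ S := hS (Finset.mem_insert_self _ _)
    have hsub : _ ⊆ S := fun x hx => hS (Finset.mem_insert_of_mem hx)
    have := SC.conjL (ih1 (insert _ (insert _ S))
      (Finset.insert_subset_insert _ (Finset.insert_subset_insert _ hsub)))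
    simpa [Finset.insert_eq_self.mpr hm] using this
  | conjR h1 h2 ih1 ih2 =>
    intro S hS; exact SC.conjR (ih1 S hS) (ih2 S hS)
  | disjL h1 h2 ih1 ih2 =>
    intro S hS
    have hm : disj _ _ ∈ S := hS (Finset.mem_insert_self _ _)
    have hsub : _ ⊆ S := fun x hx => hS (Finset.mem_insert_of_mem hx)
    have := SC.disjL (ih1 _ (Finset.insert_subset_insert _ hsub))
      (ih2 _ (Finset.insert_subset_insert _ hsub))
    simpa [Finset.insert_eq_self.mpr hm] using this
  | disjR1 h1 ih1 => intro S hS; exact SC.disjR1 (ih1 S hS)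
  | disjR2 h1 ih1 => intro S hS; exact SC.disjR2 (ih1 S hS)
  | negnegL h1 ih1 =>
    intro S hS
    have hm : neg (neg _) ∈ S := hS (Finset.mem_insert_self _ _)
    have hsub : _ ⊆ S := fun x hx => hS (Finset.mem_insert_of_mem hx)
    have := SC.negnegL (ih1 _ (Finset.insert_subset_insert _ hsub))
    simpa [Finset.insert_eq_self.mpr hm] using this
  | negnegR h1 ih1 => intro S hS; exact SC.negnegR (ih1 S hS)
  | negimplL h1 h2 ih1 ih2 =>
    intro S hS
    have hm : neg (impl _ _) ∈ S := hS (Finset.mem_insert_self _ _)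
    have hsub : _ ∪ _ ⊆ S := fun x hx => hS (Finset.mem_insert_of_mem hx)
    have := SC.negimplL (ih1 S (fun x hx => hsub (Finset.mem_union_left _ hx)))
      (ih2 (insert _ S) (Finset.insert_subset_insert _
        (fun x hx => hsub (Finset.mem_union_right _ hx))))
    simpa [Finset.insert_eq_self.mpr hm] using this
  | negimplR h1 ih1 =>
    intro S hS
    exact SC.negimplR (ih1 _ (Finset.insert_subset_insert _ hS))
  | negconjL h1 h2 ih1 ih2 =>
    intro S hS
    have hm : neg (conj _ _) ∈ S := hS (Finset.mem_insert_self _ _)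
    have hsub : _ ⊆ S := fun x hx => hS (Finset.mem_insert_of_mem hx)
    have := SC.negconjL (ih1 _ (Finset.insert_subset_insert _ hsub))
      (ih2 _ (Finset.insert_subset_insert _ hsub))
    simpa [Finset.insert_eq_self.mpr hm] using this
  | negconjR1 h1 ih1 => intro S hS; exact SC.negconjR1 (ih1 S hS)
  | negconjR2 h1 ih1 => intro S hS; exact SC.negconjR2 (ih1 S hS)
  | negdisjL h1 ih1 =>
    intro S hS
    have hm : neg (disj _ _) ∈ S := hS (Finset.mem_insert_self _ _)
    have hsub : _ ⊆ S := fun x hx => hS (Finset.mem_insert_of_mem hx)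
    have := SC.negdisjL (ih1 _
      (Finset.insert_subset_insert _ (Finset.insert_subset_insert _ hsub)))
    simpa [Finset.insert_eq_self.mpr hm] using this
  | negdisjR h1 h2 ih1 ih2 =>
    intro S hS; exact SC.negdisjR (ih1 S hS) (ih2 S hS)
  | exMid hr h1 h2 ih1 ih2 =>
    intro S hS
    exact SC.exMid hr (ih1 _ (Finset.insert_subset_insert _ hS))
      (ih2 _ (Finset.insert_subset_insert _ hS))
  | peirce hr h1 ih1 =>
    intro S hS
    exact SC.peirce hr (ih1 _ (Finset.insert_subset_insert _ hS))
  | gem hr h1 h2 ih1 ih2 =>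
    intro S hS
    exact SC.gem hr (ih1 _ (Finset.insert_subset_insert _ hS))
      (ih2 _ (Finset.insert_subset_insert _ hS))
  | atEx hr h1 h2 ih1 ih2 =>
    intro S hS
    exact SC.atEx hr (ih1 _ (Finset.insert_subset_insert _ hS))
      (ih2 _ (Finset.insert_subset_insert _ hS))

lemma SC.idGen (R : Rules) :
    ∀ a : Fm, (∀ Γ, SC R (insert a Γ) a) ∧ (∀ Γ, SC R (insert (neg a) Γ) (neg a)) := by
  intro a
  induction a with
  | var p => exact ⟨fun Γ => SC.init1 p Γ, fun Γ => SC.init2 p Γ⟩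
  | conj a b iha ihb =>
    constructor
    · intro Γ
      apply SC.conjL
      exact SC.conjR (iha.1 _)
        ((ihb.1 (insert a Γ)).weak _ (by intro x hx; simp at hx ⊢; tauto))
    · intro Γ
      exact SC.negconjL (SC.negconjR1 (iha.2 _)) (SC.negconjR2 (ihb.2 _))
  | disj a b iha ihb =>
    constructor
    · intro Γ
      exact SC.disjL (SC.disjR1 (iha.1 _)) (SC.disjR2 (ihb.1 _))
    · intro Γ
      apply SC.negdisjL
      exact SC.negdisjR (iha.2 _)
        ((ihb.2 (insert (neg a) Γ)).weak _ (by intro x hx; simp at hx ⊢; tauto))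
  | impl a b iha ihb =>
    constructor
    · intro Γ
      apply SC.implR
      have := SC.implL (R := R) (iha.1 Γ) (ihb.1 (insert a Γ))
      exact this.weak _ (by intro x hx; simp at hx ⊢; tauto)
    · intro Γ
      apply SC.negimplR
      have := SC.negimplL (R := R) (iha.1 Γ) (ihb.2 (insert a Γ))
      exact this.weak _ (by intro x hx; simp at hx ⊢; tauto)
  | neg a iha =>
    refine ⟨iha.2, ?_⟩
    intro Γ
    exact SC.negnegL (SC.negnegR (iha.1 Γ))

theorem stmt13 (Γ : Finset Fm) (β : Fm) (h : NC Γ β) : SC sC Γ β := by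
  have hid : ∀ (a : Fm) (Γ : Finset Fm), SC sC (insert a Γ) a :=
    fun a Γ => (SC.idGen sC a).1 Γ
  induction h with
  | ass a => exact hid a ∅
  | impI a h1 ih1 =>
    exact SC.implR (ih1.weak _ (fun x hx => by
      by_cases hxa : x = a
      · subst hxa; exact Finset.mem_insert_self _ _
      · exact Finset.mem_insert_of_mem (Finset.mem_erase.mpr ⟨hxa, hx⟩)))
  | impE h1 h2 ih1 ih2 =>
    rename_i Γ' Δ a b
    have step : SC sC (insert (impl a b) Δ) b := by
      have := SC.implL (R := sC) ih2 (hid b ∅)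
      exact this.weak _ (by intro x hx; simp at hx ⊢; tauto)
    exact SC.cut rfl ih1 step
  | conjI h1 h2 ih1 ih2 =>
    exact SC.conjR (ih1.weak _ Finset.subset_union_left)
      (ih2.weak _ Finset.subset_union_right)
  | conjE1 h1 ih1 =>
    rename_i Γ' a b
    have step : SC sC (insert (conj a b) ∅) a := by
      apply SC.conjL
      exact (hid a (insert b ∅)).weak _ (by intro x hx; simp at hx ⊢; tauto)
    have := SC.cut rfl ih1 step
    simpa using this
  | conjE2 h1 ih1 =>
    rename_i Γ' a b
    have step : SC sC (insert (conj a b) ∅) b := by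
      apply SC.conjL
      exact (hid b (insert a ∅)).weak _ (by intro x hx; simp at hx ⊢; tauto)
    have := SC.cut rfl ih1 step
    simpa using this
  | disjI1 h1 ih1 => exact SC.disjR1 ih1
  | disjI2 h1 ih1 => exact SC.disjR2 ih1
  | disjE h1 h2 h3 ih1 ih2 ih3 =>
    rename_i Γ' Δ Θ a b c
    have step : SC sC (insert (disj a b) (Δ.erase a ∪ Θ.erase b)) c := by
      apply SC.disjL
      · exact ih2.weak _ (fun x hx => by
          by_cases hxa : x = a
          · subst hxa; exact Finset.mem_insert_self _ _
          · exact Finset.mem_insert_of_mem (Finset.mem_union_left _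
              (Finset.mem_erase.mpr ⟨hxa, hx⟩)))
      · exact ih3.weak _ (fun x hx => by
          by_cases hxb : x = b
          · subst hxb; exact Finset.mem_insert_self _ _
          · exact Finset.mem_insert_of_mem (Finset.mem_union_right _
              (Finset.mem_erase.mpr ⟨hxb, hx⟩)))
    have := SC.cut rfl ih1 step
    exact this.weak _ (by intro x hx; simp at hx ⊢; tauto)
  | negnegI h1 ih1 => exact SC.negnegR ih1
  | negnegE h1 ih1 =>
    rename_i Γ' a
    have step : SC sC (insert (neg (neg a)) ∅) a := SC.negnegL (hid a ∅)
    have := SC.cut rfl ih1 step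
    simpa using this
  | negimpI a h1 ih1 =>
    exact SC.negimplR (ih1.weak _ (fun x hx => by
      by_cases hxa : x = a
      · subst hxa; exact Finset.mem_insert_self _ _
      · exact Finset.mem_insert_of_mem (Finset.mem_erase.mpr ⟨hxa, hx⟩)))
  | negimpE h1 h2 ih1 ih2 =>
    rename_i Γ' Δ a b
    have step : SC sC (insert (neg (impl a b)) Δ) (neg b) := by
      have := SC.negimplL (R := sC) ih2 ((SC.idGen sC b).2 ∅)
      exact this.weak _ (by intro x hx; simp at hx ⊢; tauto)
    exact SC.cut rfl ih1 step
  | negconjI1 h1 ih1 => exact SC.negconjR1 ih1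
  | negconjI2 h1 ih1 => exact SC.negconjR2 ih1
  | negconjE h1 h2 h3 ih1 ih2 ih3 =>
    rename_i Γ' Δ Θ a b c
    have step : SC sC (insert (neg (conj a b)) (Δ.erase (neg a) ∪ Θ.erase (neg b))) c := by
      apply SC.negconjL
      · exact ih2.weak _ (fun x hx => by
          by_cases hxa : x = neg a
          · subst hxa; exact Finset.mem_insert_self _ _
          · exact Finset.mem_insert_of_mem (Finset.mem_union_left _
              (Finset.mem_erase.mpr ⟨hxa, hx⟩)))
      · exact ih3.weak _ (fun x hx => by
          by_cases hxb : x = neg b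
          · subst hxb; exact Finset.mem_insert_self _ _
          · exact Finset.mem_insert_of_mem (Finset.mem_union_right _
              (Finset.mem_erase.mpr ⟨hxb, hx⟩)))
    have := SC.cut rfl ih1 step
    exact this.weak _ (by intro x hx; simp at hx ⊢; tauto)
  | negdisjI h1 h2 ih1 ih2 =>
    exact SC.negdisjR (ih1.weak _ Finset.subset_union_left)
      (ih2.weak _ Finset.subset_union_right)
  | negdisjE1 h1 ih1 =>
    rename_i Γ' a b
    have step : SC sC (insert (neg (disj a b)) ∅) (neg a) := by
      apply SC.negdisjL
      exact ((SC.idGen sC a).2 (insert (neg b) ∅))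
    have := SC.cut rfl ih1 step
    simpa using this
  | negdisjE2 h1 ih1 =>
    rename_i Γ' a b
    have step : SC sC (insert (neg (disj a b)) ∅) (neg b) := by
      apply SC.negdisjL
      exact ((SC.idGen sC b).2 (insert (neg a) ∅)).weak _
        (by intro x hx; simp at hx ⊢; tauto)
    have := SC.cut rfl ih1 step
    simpa using this
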